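/- Define φ(α, r) = α log((α cosh r + √(1 + α² sinh² r))/√(α²-1)) + (1/2) log((cosh r − √(1+α² sinh² r))/(cosh r + √(1+α² sinh² r))). Then as r → 0⁺ (with α fixed, Re α > 0, α ∉ [0,1]), φ(α, r) = log(r/2) + p(α) + O(r²), where p(α) = (α/2) log((α+1)/(α-1)) + (1/2) log(1-α²). -/

import Mathlib

open Set

/-- Principal branch square root. -/
noncomputable def csqrt (z : ℂ) : ℂ := z ^ ((1 : ℂ) / 2)

/-- The Liouville phase `φ(α,r)` for the Legendre equation. -/
noncomputable def phiL (α : ℂ) (r : ℝ) : ℂ :=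
  α * Complex.log ((α * (Real.cosh r : ℂ) + csqrt (1 + α ^ 2 * (Real.sinh r : ℂ) ^ 2))
        / csqrt (α ^ 2 - 1))
    + (1 / 2) * Complex.log (((Real.cosh r : ℂ) - csqrt (1 + α ^ 2 * (Real.sinh r : ℂ) ^ 2))
        / ((Real.cosh r : ℂ) + csqrt (1 + α ^ 2 * (Real.sinh r : ℂ) ^ 2)))

/-- `p(α) = (α/2) log((α+1)/(α-1)) + (1/2) log(1-α²)`. -/
noncomputable def pfun (α : ℂ) : ℂ :=
  α / 2 * Complex.log ((α + 1) / (α - 1)) + (1 / 2) * Complex.log (1 - α ^ 2)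

lemma csqrt_sq {z : ℂ} (hz : z ≠ 0) : csqrt z ^ 2 = z := by
  rw [csqrt, sq, ← Complex.cpow_add _ _ hz]
  norm_num

lemma re_csqrt_pos {z : ℂ} (hz : z ∈ Complex.slitPlane) : 0 < (csqrt z).re := by
  have hz0 : z ≠ 0 := Complex.slitPlane_ne_zero hz
  rw [csqrt, Complex.cpow_def_of_ne_zero hz0, Complex.exp_re]
  have harg : |z.arg| < Real.pi :=
    abs_lt.2 ⟨Complex.neg_pi_lt_arg z,
      lt_of_le_of_ne (Complex.arg_le_pi z) (Complex.slitPlane_arg_ne_pi hz)⟩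
  have him : (Complex.log z * (1 / 2)).im = z.arg / 2 := by
    simp [Complex.mul_im, Complex.log_im]
    ring
  rw [him]
  have : 0 < Real.cos (z.arg / 2) := by
    apply Real.cos_pos_of_mem_Ioo
    rw [abs_lt] at harg
    constructor <;> [linarith; linarith]
  positivity

lemma ne_zero_of_re_pos' {z : ℂ} (hz : 0 < z.re) : z ≠ 0 := by
  intro h; rw [h] at hz; simp at hz

lemma log_mul_repos {x y : ℂ} (hx : 0 < x.re) (hy : 0 < y.re) :
    Complex.log (x * y) = Complex.log x + Complex.log y := by
  apply Complex.log_mul (ne_zero_of_re_pos' hx) (ne_zero_of_re_pos' hy)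
  have h1 : |x.arg| < Real.pi / 2 := Complex.abs_arg_lt_pi_div_two_iff.2 (Or.inl hx)
  have h2 : |y.arg| < Real.pi / 2 := Complex.abs_arg_lt_pi_div_two_iff.2 (Or.inl hy)
  rw [abs_lt] at h1 h2
  constructor <;> [linarith; linarith]

lemma norm_log_le_of_close {z : ℂ} (h : ‖z - 1‖ ≤ 1 / 2) :
    ‖Complex.log z‖ ≤ (3 / 2) * ‖z - 1‖ := by
  have := Complex.norm_log_one_add_half_le_self (z := z - 1) h
  simpa using this

lemma real_log_abs_le {x : ℝ} (h : |x - 1| ≤ 1 / 2) : |Real.log x| ≤ 2 * |x - 1| := by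
  have hx : (1:ℝ)/2 ≤ x := by cases abs_le.1 h; linarith
  have hx0 : 0 < x := by linarith
  rw [abs_le]
  constructor
  · have h2 : Real.log x⁻¹ ≤ x⁻¹ - 1 := Real.log_le_sub_one_of_pos (by positivity)
    rw [Real.log_inv] at h2
    have h4 : (1 - x) / x ≤ 2 * |x - 1| := by
      rw [div_le_iff₀ hx0]
      have : 1 - x ≤ |x - 1| := by rw [abs_sub_comm]; exact le_abs_self _
      nlinarith [abs_nonneg (x - 1)]
    have h3 : x⁻¹ - 1 = (1 - x) / x := by field_simp
    nlinarith [h2, h4]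
  · have h1 : Real.log x ≤ x - 1 := Real.log_le_sub_one_of_pos hx0
    calc Real.log x ≤ x - 1 := h1
      _ ≤ |x - 1| := le_abs_self _
      _ ≤ 2 * |x - 1| := by linarith [abs_nonneg (x-1)]

lemma re_ge_of_close {z : ℂ} (h : ‖z - 1‖ ≤ 1 / 2) : 1 / 2 ≤ z.re := by
  have h1 : |(z - 1).re| ≤ ‖z - 1‖ := Complex.abs_re_le_norm _
  have h2 : (z - 1).re = z.re - 1 := by simp
  rw [h2] at h1
  cases abs_le.1 h1; linarith

lemma exp_quad {x : ℝ} (hx : |x| ≤ 1) :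
    |Real.exp x - (1 + x + x ^ 2 / 2)| ≤ |x| ^ 3 * (2 / 9) := by
  have h := Real.exp_bound hx (by norm_num : 0 < 3)
  have hs : (∑ m ∈ Finset.range 3, x ^ m / m.factorial) = 1 + x + x ^ 2 / 2 := by
    norm_num [Finset.sum_range_succ, Nat.factorial]
  rw [hs] at h
  convert h using 2
  norm_num [Nat.factorial]

lemma sinh_est {r : ℝ} (h0 : 0 < r) (h1 : r ≤ 1) : |Real.sinh r - r| ≤ r ^ 3 := by
  have hr : |r| ≤ 1 := by rw [abs_of_pos h0]; exact h1
  have hr' : |(-r)| ≤ 1 := by rwa [abs_neg]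
  have hp := exp_quad hr
  have hm := exp_quad hr'
  rw [Real.sinh_eq]
  rw [abs_of_pos h0] at hp
  rw [abs_neg, abs_of_pos h0] at hm
  rw [abs_le] at hp hm ⊢
  constructor <;> nlinarith [hp.1, hp.2, hm.1, hm.2, pow_pos h0 3]

lemma cosh_est {r : ℝ} (h0 : 0 < r) (h1 : r ≤ 1) : |Real.cosh r - 1| ≤ r ^ 2 := by
  have hr : |r| ≤ 1 := by rw [abs_of_pos h0]; exact h1
  have hr' : |(-r)| ≤ 1 := by rwa [abs_neg]
  have hp := exp_quad hr
  have hm := exp_quad hr'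
  rw [Real.cosh_eq]
  rw [abs_of_pos h0] at hp
  rw [abs_neg, abs_of_pos h0] at hm
  have h3 : r ^ 3 ≤ r ^ 2 := by nlinarith
  rw [abs_le] at hp hm ⊢
  constructor <;> nlinarith [hp.1, hp.2, hm.1, hm.2]

lemma sinh_le_two {r : ℝ} (h0 : 0 < r) (h1 : r ≤ 1) : Real.sinh r ≤ 2 * r := by
  have := sinh_est h0 h1
  rw [abs_le] at this
  nlinarith [this.2, pow_le_one₀ (n := 3) h0.le h1, sq_nonneg r, pow_pos h0 3]

set_option maxHeartbeats 2000000 in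
lemma core (α : ℂ) (hα : 0 < α.re) (hcut : ¬ (α.im = 0 ∧ α.re ≤ 1)) {r : ℝ}
    (h0 : 0 < r) (h1 : r ≤ 1)
    (hsmall : (4 * ‖α‖ ^ 2 + ‖α‖ + 1) * r ^ 2 ≤ 1 / 2)
    (harg : (1 - α ^ 2).arg +
        ((((((Real.cosh r : ℂ) + csqrt (1 + α ^ 2 * (Real.sinh r : ℂ) ^ 2)) / 2) ^ 2)⁻¹)).arg
        ∈ Set.Ioc (-Real.pi) Real.pi) :
    ‖phiL α r - (Complex.log ((r : ℂ) / 2) + pfun α)‖ ≤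
      (3 / 2 * ‖α‖ * (‖α‖ + 4 * ‖α‖ ^ 2) + 2 + 3 / 2 * (1 + 4 * ‖α‖ ^ 2)) * r ^ 2 := by
  -- basic α facts
  have hα1' : α + 1 ≠ 0 := ne_zero_of_re_pos' (by simp [Complex.add_re]; linarith)
  have hαne1 : α ≠ 1 := by rintro rfl; exact hcut ⟨rfl, le_refl _⟩
  have hαm1 : α - 1 ≠ 0 := sub_ne_zero.2 hαne1
  have hsq0 : α ^ 2 - 1 ≠ 0 := by
    have : α ^ 2 - 1 = (α - 1) * (α + 1) := by ring
    rw [this]; exact mul_ne_zero hαm1 hα1'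
  have hK0 : 1 - α ^ 2 ≠ 0 := by
    intro h; apply hsq0; rw [← neg_sub]; simpa using congrArg Neg.neg h
  have hslit : α ^ 2 - 1 ∈ Complex.slitPlane := by
    rcases eq_or_ne α.im 0 with hb | hb
    · left
      have ha1 : 1 < α.re := lt_of_not_ge fun h => hcut ⟨hb, h⟩
      simp only [Complex.sub_re, Complex.one_re, Complex.sq_norm]
      have : (α ^ 2).re = α.re * α.re - α.im * α.im := by
        rw [sq]; simp [Complex.mul_re]
      rw [this, hb]; nlinarith
    · right
      have : (α ^ 2 - 1).im = 2 * (α.re * α.im) := by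
        rw [sq]; simp [Complex.mul_im]; ring
      rw [this]; positivity
  set Q : ℂ := csqrt (α ^ 2 - 1) with hQdef
  have hQre : 0 < Q.re := re_csqrt_pos hslit
  have hQ0 : Q ≠ 0 := ne_zero_of_re_pos' hQre
  have hQsq : Q ^ 2 = α ^ 2 - 1 := csqrt_sq hsq0
  -- v = (α+1)/Q has positive real part
  set v : ℂ := (α + 1) / Q with hvdef
  have hQim : Q.re * Q.im = α.re * α.im := by
    have h := congrArg Complex.im hQsq
    simp only [sq, Complex.mul_im, Complex.sub_im, Complex.one_im, sub_zero] at h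
    linarith
  have hv_re : 0 < v.re := by
    rw [hvdef, Complex.div_re]
    have him : (α + 1).im = α.im := by simp
    have hre : (α + 1).re = α.re + 1 := by simp
    rw [him, hre, ← add_div]
    apply div_pos
    · have h5 : 0 ≤ α.im * Q.im := by
        rcases le_or_gt 0 (α.im * Q.im) with h | h
        · exact h
        · exfalso
          have h7 : α.im * (Q.re * Q.im) = α.im * (α.re * α.im) := by rw [hQim]
          nlinarith [mul_pos hQre (neg_pos.2 h), h7, mul_nonneg hα.le (sq_nonneg α.im)]
      have h6 : 0 < (α.re + 1) * Q.re := mul_pos (by linarith) hQre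
      linarith
    · exact Complex.normSq_pos.2 hQ0
  have hv0 : v ≠ 0 := ne_zero_of_re_pos' hv_re
  -- real quantities
  have hs0 : 0 < Real.sinh r := by rw [← Real.sinh_zero]; exact Real.sinh_lt_sinh.2 h0
  have hsle : Real.sinh r ≤ 2 * r := sinh_le_two h0 h1
  have hsr : |Real.sinh r - r| ≤ r ^ 3 := sinh_est h0 h1
  have hc1 : 1 ≤ Real.cosh r := Real.one_le_cosh r
  have hce : |Real.cosh r - 1| ≤ r ^ 2 := cosh_est h0 h1
  set s : ℝ := Real.sinh r with hsdef
  set c : ℝ := Real.cosh r with hcdef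
  -- complex quantities
  set P : ℂ := 1 + α ^ 2 * (s : ℂ) ^ 2 with hPdef
  have hPnorm : ‖P - 1‖ ≤ 4 * ‖α‖ ^ 2 * r ^ 2 := by
    have : P - 1 = α ^ 2 * (s : ℂ) ^ 2 := by rw [hPdef]; ring
    rw [this, norm_mul, norm_pow, norm_pow, Complex.norm_real, Real.norm_eq_abs,
      abs_of_pos hs0]
    have hs2 : s ^ 2 ≤ 4 * r ^ 2 := by nlinarith [hs0, hsle]
    nlinarith [mul_nonneg (sq_nonneg ‖α‖) (by linarith : (0:ℝ) ≤ 4 * r ^ 2 - s ^ 2)]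
  have hr2small : r ^ 2 ≤ 1 / 2 := by nlinarith [norm_nonneg α, sq_nonneg ‖α‖, sq_nonneg r]
  have hPhalf : ‖P - 1‖ ≤ 1 / 2 := by
    refine hPnorm.trans ?_
    nlinarith [norm_nonneg α, sq_nonneg r]
  have hPre : 1 / 2 ≤ P.re := re_ge_of_close hPhalf
  have hPslit : P ∈ Complex.slitPlane := Or.inl (by linarith)
  have hP0 : P ≠ 0 := ne_zero_of_re_pos' (by linarith)
  set S : ℂ := csqrt P with hSdef
  have hSre : 0 < S.re := re_csqrt_pos hPslit
  have hSsq : S ^ 2 = P := csqrt_sq hP0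
  have hS1ne : S + 1 ≠ 0 := ne_zero_of_re_pos' (by simp [Complex.add_re]; linarith)
  have hSnorm : ‖S - 1‖ ≤ 4 * ‖α‖ ^ 2 * r ^ 2 := by
    have heq : S - 1 = (P - 1) / (S + 1) := by
      rw [eq_div_iff hS1ne]
      linear_combination hSsq
    rw [heq, norm_div]
    have h1' : (1:ℝ) ≤ ‖S + 1‖ := by
      have := Complex.re_le_norm (S + 1)
      have h2 : (S + 1).re = S.re + 1 := by simp
      rw [h2] at this
      linarith
    calc ‖P - 1‖ / ‖S + 1‖ ≤ ‖P - 1‖ / 1 := by gcongr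
      _ = ‖P - 1‖ := div_one _
      _ ≤ _ := hPnorm
  -- m and u
  set m : ℂ := ((c : ℂ) + S) / 2 with hmdef
  set u : ℂ := (α * (c : ℂ) + S) / (α + 1) with hudef
  have hmnorm : ‖m - 1‖ ≤ (1 + 4 * ‖α‖ ^ 2) * r ^ 2 := by
    have heq : m - 1 = (((c : ℝ) - 1 : ℝ) : ℂ) / 2 + (S - 1) / 2 := by
      rw [hmdef]; push_cast; ring
    rw [heq]
    calc ‖(((c : ℝ) - 1 : ℝ) : ℂ) / 2 + (S - 1) / 2‖
        ≤ ‖(((c : ℝ) - 1 : ℝ) : ℂ) / 2‖ + ‖(S - 1) / 2‖ := norm_add_le _ _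
      _ = |c - 1| / 2 + ‖S - 1‖ / 2 := by
          rw [norm_div, norm_div, Complex.norm_real, Real.norm_eq_abs]
          norm_num
      _ ≤ r ^ 2 / 2 + (4 * ‖α‖ ^ 2 * r ^ 2) / 2 := by
          have := hce; have := hSnorm; gcongr
      _ ≤ (1 + 4 * ‖α‖ ^ 2) * r ^ 2 := by nlinarith [sq_nonneg r, sq_nonneg ‖α‖]
  have hmhalf : ‖m - 1‖ ≤ 1 / 2 := by
    refine hmnorm.trans (le_trans ?_ hsmall)
    exact mul_le_mul_of_nonneg_right (by linarith [norm_nonneg α]) (sq_nonneg r)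
  have hmre : 1 / 2 ≤ m.re := re_ge_of_close hmhalf
  have hmre' : 0 < m.re := by linarith
  have hm0 : m ≠ 0 := ne_zero_of_re_pos' hmre'
  have hα1norm : (1 : ℝ) ≤ ‖α + 1‖ := by
    have := Complex.re_le_norm (α + 1)
    have h2 : (α + 1).re = α.re + 1 := by simp
    rw [h2] at this
    linarith
  have hunorm : ‖u - 1‖ ≤ (‖α‖ + 4 * ‖α‖ ^ 2) * r ^ 2 := by
    have heq : u - 1 = (α * (((c : ℝ) - 1 : ℝ) : ℂ) + (S - 1)) / (α + 1) := by
      rw [hudef, div_sub' hα1']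
      push_cast; ring_nf
    rw [heq, norm_div]
    have hnum : ‖α * (((c : ℝ) - 1 : ℝ) : ℂ) + (S - 1)‖ ≤ (‖α‖ + 4 * ‖α‖ ^ 2) * r ^ 2 := by
      calc ‖α * (((c : ℝ) - 1 : ℝ) : ℂ) + (S - 1)‖
          ≤ ‖α * (((c : ℝ) - 1 : ℝ) : ℂ)‖ + ‖S - 1‖ := norm_add_le _ _
        _ = ‖α‖ * |c - 1| + ‖S - 1‖ := by
            rw [norm_mul, Complex.norm_real, Real.norm_eq_abs]
        _ ≤ ‖α‖ * r ^ 2 + 4 * ‖α‖ ^ 2 * r ^ 2 := by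
            have := hSnorm; gcongr
        _ = (‖α‖ + 4 * ‖α‖ ^ 2) * r ^ 2 := by ring
    exact le_trans (div_le_self (norm_nonneg _) hα1norm) hnum
  have huhalf : ‖u - 1‖ ≤ 1 / 2 := by
    refine hunorm.trans (le_trans ?_ hsmall)
    exact mul_le_mul_of_nonneg_right (by nlinarith [norm_nonneg α, sq_nonneg ‖α‖] : ‖α‖ + 4 * ‖α‖ ^ 2 ≤ 4 * ‖α‖ ^ 2 + ‖α‖ + 1) (sq_nonneg r)
  have hure : 0 < u.re := by linarith [re_ge_of_close huhalf]
  set K : ℂ := 1 - α ^ 2 with hKdef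
  set w : ℂ := (α + 1) / (α - 1) with hwdef
  have hcS0re : 0 < ((c : ℂ) + S).re := by
    simp only [Complex.add_re, Complex.ofReal_re]; linarith
  have hcS0 : (c : ℂ) + S ≠ 0 := ne_zero_of_re_pos' hcS0re
  -- T1 : log((αc+S)/Q) = log u + log v
  have hT1 : Complex.log ((α * (c : ℂ) + S) / Q) = Complex.log u + Complex.log v := by
    have hmul : u * v = (α * (c : ℂ) + S) / Q := by
      rw [hudef, hvdef]; field_simp
    rw [← hmul, log_mul_repos hure hv_re]
  -- T2 : log v = (1/2) log w
  have hT2 : Complex.log w = 2 * Complex.log v := by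
    have hvv : v * v = w := by
      rw [hvdef, hwdef, div_mul_div_comm, ← sq, ← sq, hQsq, div_eq_div_iff hsq0 hαm1]
      ring
    rw [← hvv, log_mul_repos hv_re hv_re, two_mul]
  have hlogv : Complex.log v = (1 / 2) * Complex.log w := by rw [hT2]; ring
  -- T3 : log((c-S)/(c+S)) = log((s/2)^2) + log (K/m^2)
  have hcs : ((c : ℂ)) ^ 2 = 1 + ((s : ℂ)) ^ 2 := by
    have h := Real.cosh_sq r
    have : c ^ 2 = 1 + s ^ 2 := by rw [hcdef, hsdef]; linarith
    exact_mod_cast congrArg (Complex.ofReal) this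
  have hnum : ((c : ℂ) - S) * ((c : ℂ) + S) = ((s : ℂ)) ^ 2 * K := by
    rw [hKdef]; linear_combination hcs - hSsq
  have hq32 : ((c : ℂ) - S) / ((c : ℂ) + S) = ((s : ℂ)) ^ 2 * K / ((c : ℂ) + S) ^ 2 := by
    rw [div_eq_div_iff hcS0 (pow_ne_zero 2 hcS0)]
    linear_combination ((c : ℂ) + S) * hnum
  have hm2 : ((s : ℂ)) ^ 2 * K / ((c : ℂ) + S) ^ 2 = (((s / 2) ^ 2 : ℝ) : ℂ) * (K / m ^ 2) := by
    have hm2' : m ^ 2 = ((c : ℂ) + S) ^ 2 / 4 := by rw [hmdef]; ring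
    rw [hm2']
    field_simp
    push_cast
    ring
  have hT3 : Complex.log (((c : ℂ) - S) / ((c : ℂ) + S))
      = ((Real.log ((s / 2) ^ 2) : ℝ) : ℂ) + Complex.log (K / m ^ 2) := by
    rw [hq32, hm2]
    exact Complex.log_ofReal_mul (by positivity) (div_ne_zero hK0 (pow_ne_zero 2 hm0))
  -- T5 : log(K/m^2) = log K - 2 log m
  have hlogm2 : Complex.log (m ^ 2) = 2 * Complex.log m := by
    rw [sq, log_mul_repos hmre' hmre', two_mul]
  have hargm2 : (m ^ 2).arg ≠ Real.pi := by
    have h := congrArg Complex.im hlogm2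
    simp only [Complex.log_im, Complex.mul_im, Complex.re_ofNat, Complex.im_ofNat,
      Complex.log_re, zero_mul, add_zero, mul_zero, sub_zero] at h
    have habs : |m.arg| < Real.pi / 2 := Complex.abs_arg_lt_pi_div_two_iff.2 (Or.inl hmre')
    rw [abs_lt] at habs
    intro hpi
    rw [hpi] at h
    linarith [Real.pi_pos]
  have hT5 : Complex.log (K / m ^ 2) = Complex.log K - 2 * Complex.log m := by
    rw [div_eq_mul_inv,
      Complex.log_mul hK0 (inv_ne_zero (pow_ne_zero 2 hm0)) harg,
      Complex.log_inv _ hargm2, hlogm2]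
    ring
  -- assemble the identity
  have hphi_eq : phiL α r = α * Complex.log ((α * (c : ℂ) + S) / Q)
      + (1 / 2) * Complex.log (((c : ℂ) - S) / ((c : ℂ) + S)) := rfl
  have hpfun_eq : pfun α = α / 2 * Complex.log w + (1 / 2) * Complex.log K := rfl
  have hlogr : Complex.log ((r : ℂ) / 2) = ((Real.log (r / 2) : ℝ) : ℂ) := by
    rw [show ((r : ℂ) / 2) = ((r / 2 : ℝ) : ℂ) by push_cast; ring,
      ← Complex.ofReal_log (by positivity)]
  have hslog : Real.log ((s / 2) ^ 2) = 2 * Real.log (s / 2) := by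
    have := Real.log_pow (s / 2) 2; push_cast at this; linarith
  have l1 : Real.log (s / 2) = Real.log s - Real.log 2 := Real.log_div hs0.ne' two_ne_zero
  have l2 : Real.log (r / 2) = Real.log r - Real.log 2 := Real.log_div h0.ne' two_ne_zero
  have l3 : Real.log (s / r) = Real.log s - Real.log r := Real.log_div hs0.ne' h0.ne'
  have hfinal : phiL α r - (Complex.log ((r : ℂ) / 2) + pfun α)
      = α * Complex.log u + ((Real.log (s / r) : ℝ) : ℂ) - Complex.log m := by
    rw [hphi_eq, hpfun_eq, hT1, hT3, hT5, hlogv, hlogr, hslog, l1, l2, l3]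
    push_cast
    ring
  -- final bound
  rw [hfinal]
  have hbu : ‖Complex.log u‖ ≤ 3 / 2 * ((‖α‖ + 4 * ‖α‖ ^ 2) * r ^ 2) := by
    refine le_trans (norm_log_le_of_close huhalf) ?_
    nlinarith [hunorm]
  have hbm : ‖Complex.log m‖ ≤ 3 / 2 * ((1 + 4 * ‖α‖ ^ 2) * r ^ 2) := by
    refine le_trans (norm_log_le_of_close hmhalf) ?_
    nlinarith [hmnorm]
  have hbs : |Real.log (s / r)| ≤ 2 * r ^ 2 := by
    have hratio : |s / r - 1| ≤ r ^ 2 := by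
      rw [show s / r - 1 = (s - r) / r by field_simp, abs_div, abs_of_pos h0,
        div_le_iff₀ h0]
      calc |s - r| ≤ r ^ 3 := hsr
        _ = r ^ 2 * r := by ring
    have hhalf : |s / r - 1| ≤ 1 / 2 := hratio.trans hr2small
    calc |Real.log (s / r)| ≤ 2 * |s / r - 1| := real_log_abs_le hhalf
      _ ≤ 2 * r ^ 2 := by linarith
  calc ‖α * Complex.log u + ((Real.log (s / r) : ℝ) : ℂ) - Complex.log m‖
      ≤ ‖α * Complex.log u + ((Real.log (s / r) : ℝ) : ℂ)‖ + ‖Complex.log m‖ :=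
        norm_sub_le _ _
    _ ≤ ‖α‖ * ‖Complex.log u‖ + |Real.log (s / r)| + ‖Complex.log m‖ := by
        have := norm_add_le (α * Complex.log u) (((Real.log (s / r) : ℝ) : ℂ))
        rw [norm_mul, Complex.norm_real, Real.norm_eq_abs] at this
        linarith
    _ ≤ ‖α‖ * (3 / 2 * ((‖α‖ + 4 * ‖α‖ ^ 2) * r ^ 2)) + 2 * r ^ 2
        + 3 / 2 * ((1 + 4 * ‖α‖ ^ 2) * r ^ 2) := by
        have h1' := mul_le_mul_of_nonneg_left hbu (norm_nonneg α)
        linarith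
    _ = (3 / 2 * ‖α‖ * (‖α‖ + 4 * ‖α‖ ^ 2) + 2 + 3 / 2 * (1 + 4 * ‖α‖ ^ 2)) * r ^ 2 := by
        ring

/-- As `r → 0⁺`, with `α` fixed, `Re α > 0`, `α ∉ [0,1]`,
`φ(α,r) = log(r/2) + p(α) + O(r²)`. -/
theorem liouville_phase_asymptotics_at_zero (α : ℂ) (hα : 0 < α.re)
    (hcut : ¬ (α.im = 0 ∧ α.re ≤ 1)) :
    ∃ C δ : ℝ, 0 < C ∧ 0 < δ ∧ ∀ r : ℝ, 0 < r → r < δ →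
      ‖phiL α r - (Complex.log ((r : ℂ) / 2) + pfun α)‖ ≤ C * r ^ 2 := by
  set l : Filter ℝ := nhdsWithin (0 : ℝ) (Set.Ioi 0) with hl
  have hev0 : ∀ᶠ r : ℝ in l, 0 < r := eventually_mem_nhdsWithin
  have hev1 : ∀ᶠ r : ℝ in l, r < 1 :=
    (eventually_lt_nhds (by norm_num : (0:ℝ) < 1)).filter_mono nhdsWithin_le_nhds
  have t0 : Filter.Tendsto (fun r : ℝ => r) l (nhds 0) :=
    Filter.tendsto_id.mono_right nhdsWithin_le_nhds
  have htend : Filter.Tendsto (fun r : ℝ => (4 * ‖α‖ ^ 2 + ‖α‖ + 1) * r ^ 2) l (nhds 0) := by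
    simpa using ((t0.pow 2).const_mul (4 * ‖α‖ ^ 2 + ‖α‖ + 1))
  have hev2 : ∀ᶠ r : ℝ in l, (4 * ‖α‖ ^ 2 + ‖α‖ + 1) * r ^ 2 ≤ 1 / 2 :=
    (htend.eventually_lt_const (by norm_num : (0:ℝ) < 1/2)).mono fun _ h => h.le
  have hevarg : ∀ᶠ r : ℝ in l, (1 - α ^ 2).arg +
      ((((((Real.cosh r : ℂ) + csqrt (1 + α ^ 2 * (Real.sinh r : ℂ) ^ 2)) / 2) ^ 2)⁻¹)).arg
      ∈ Set.Ioc (-Real.pi) Real.pi := by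
    rcases eq_or_ne α.im 0 with hb | hb
    · refine Filter.Eventually.of_forall (fun r => ?_)
      have hα' : α = ((α.re : ℝ) : ℂ) := by
        apply Complex.ext <;> simp [hb]
      have hpos : (0:ℝ) ≤ 1 + α.re ^ 2 * (Real.sinh r) ^ 2 := by positivity
      have hS : csqrt (1 + α ^ 2 * (Real.sinh r : ℂ) ^ 2)
          = (((1 + α.re ^ 2 * (Real.sinh r) ^ 2) ^ ((1:ℝ)/2) : ℝ) : ℂ) := by
        have hP : (1 + α ^ 2 * (Real.sinh r : ℂ) ^ 2)
            = (((1 + α.re ^ 2 * (Real.sinh r) ^ 2 : ℝ)) : ℂ) := by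
          rw [hα']; push_cast [Complex.ofReal_re]; ring
        rw [hP, csqrt, Complex.ofReal_cpow hpos]
        norm_num
      have harg0 : ((((((Real.cosh r : ℂ) + csqrt (1 + α ^ 2 * (Real.sinh r : ℂ) ^ 2)) / 2) ^ 2)⁻¹)).arg = 0 := by
        rw [hS]
        have hrec : ((((Real.cosh r : ℂ) + (((1 + α.re ^ 2 * (Real.sinh r) ^ 2) ^ ((1:ℝ)/2) : ℝ) : ℂ)) / 2) ^ 2)⁻¹
            = (((((Real.cosh r + (1 + α.re ^ 2 * (Real.sinh r) ^ 2) ^ ((1:ℝ)/2)) / 2) ^ 2)⁻¹ : ℝ) : ℂ) := by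
          push_cast; ring
        rw [hrec]
        apply Complex.arg_ofReal_of_nonneg
        positivity
      rw [harg0, add_zero]
      exact ⟨Complex.neg_pi_lt_arg _, Complex.arg_le_pi _⟩
    · have hKarg : |(1 - α ^ 2).arg| < Real.pi := by
        refine abs_lt.2 ⟨Complex.neg_pi_lt_arg _, lt_of_le_of_ne (Complex.arg_le_pi _) ?_⟩
        intro hpi
        rw [Complex.arg_eq_pi_iff] at hpi
        have him : (1 - α ^ 2).im = -(2 * (α.re * α.im)) := by
          simp [sq, Complex.mul_im]; ring
        rw [him] at hpi
        have : α.re * α.im ≠ 0 := mul_ne_zero (ne_of_gt hα) hb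
        exact this (by linarith [hpi.2])
      have tP : Filter.Tendsto (fun r : ℝ => 1 + α ^ 2 * (Real.sinh r : ℂ) ^ 2) l (nhds 1) := by
        have hcont : Continuous fun r : ℝ => 1 + α ^ 2 * (Real.sinh r : ℂ) ^ 2 := by
          continuity
        have h := (hcont.tendsto 0).mono_left (nhdsWithin_le_nhds (s := Set.Ioi (0:ℝ)))
        rw [show (1 + α ^ 2 * ((Real.sinh 0 : ℝ) : ℂ) ^ 2 : ℂ) = 1 by simp] at h
        exact h
      have tS : Filter.Tendsto (fun r : ℝ => csqrt (1 + α ^ 2 * (Real.sinh r : ℂ) ^ 2)) l (nhds 1) := by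
        have hca : ContinuousAt (fun z : ℂ => z ^ ((1:ℂ)/2)) 1 :=
          continuousAt_cpow_const Complex.one_mem_slitPlane
        have h := hca.tendsto.comp tP
        rw [show (1 : ℂ) ^ ((1:ℂ)/2) = 1 from Complex.one_cpow _] at h
        exact h
      have tcosh : Filter.Tendsto (fun r : ℝ => ((Real.cosh r : ℝ) : ℂ)) l (nhds 1) := by
        have hcont : Continuous fun r : ℝ => ((Real.cosh r : ℝ) : ℂ) := by continuity
        have h := (hcont.tendsto 0).mono_left (nhdsWithin_le_nhds (s := Set.Ioi (0:ℝ)))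
        rw [show ((Real.cosh 0 : ℝ) : ℂ) = 1 by simp] at h
        exact h
      have tm : Filter.Tendsto (fun r : ℝ =>
          ((((Real.cosh r : ℂ) + csqrt (1 + α ^ 2 * (Real.sinh r : ℂ) ^ 2)) / 2) ^ 2)⁻¹) l (nhds 1) := by
        have h1 : Filter.Tendsto (fun r : ℝ =>
            (((Real.cosh r : ℂ) + csqrt (1 + α ^ 2 * (Real.sinh r : ℂ) ^ 2)) / 2)) l (nhds 1) := by
          have h := (tcosh.add tS).div_const (2 : ℂ)
          rw [show ((1 : ℂ) + 1) / 2 = 1 by norm_num] at h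
          exact h
        have h2 := (h1.pow 2).inv₀ (by norm_num)
        rw [show (((1 : ℂ) ^ 2)⁻¹ : ℂ) = 1 by norm_num] at h2
        exact h2
      have targ : Filter.Tendsto (fun r : ℝ =>
          (((((Real.cosh r : ℂ) + csqrt (1 + α ^ 2 * (Real.sinh r : ℂ) ^ 2)) / 2) ^ 2)⁻¹).arg) l
          (nhds 0) := by
        have hca := (Complex.continuousAt_arg Complex.one_mem_slitPlane).tendsto
        rw [Complex.arg_one] at hca
        exact hca.comp tm
      have hgap : 0 < Real.pi - |(1 - α ^ 2).arg| := by linarith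
      have hsmallarg : ∀ᶠ r : ℝ in l,
          |(((((Real.cosh r : ℂ) + csqrt (1 + α ^ 2 * (Real.sinh r : ℂ) ^ 2)) / 2) ^ 2)⁻¹).arg|
            < Real.pi - |(1 - α ^ 2).arg| := by
        have := targ.eventually (eventually_abs_sub_lt 0 hgap)
        simpa using this
      refine hsmallarg.mono fun r hr => ?_
      have h1 := abs_lt.1 hr
      have h2 := le_abs_self (1 - α ^ 2).arg
      have h3 := neg_abs_le (1 - α ^ 2).arg
      constructor
      · linarith [Complex.neg_pi_lt_arg (1 - α ^ 2)]
      · linarith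
  have hall := hev0.and (hev1.and (hev2.and hevarg))
  have key : ∀ᶠ r : ℝ in l, ‖phiL α r - (Complex.log ((r : ℂ) / 2) + pfun α)‖ ≤
      (3 / 2 * ‖α‖ * (‖α‖ + 4 * ‖α‖ ^ 2) + 2 + 3 / 2 * (1 + 4 * ‖α‖ ^ 2)) * r ^ 2 :=
    hall.mono fun r ⟨h0, h1, h2, h3⟩ => core α hα hcut h0 h1.le h2 h3
  rw [hl, eventually_nhdsWithin_iff, Metric.eventually_nhds_iff] at key
  obtain ⟨ε, hε, hkey⟩ := key
  refine ⟨3 / 2 * ‖α‖ * (‖α‖ + 4 * ‖α‖ ^ 2) + 2 + 3 / 2 * (1 + 4 * ‖α‖ ^ 2), ε, by positivity,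
    hε, fun r hr hrε => ?_⟩
  apply hkey _ hr
  rw [Real.dist_eq, sub_zero, abs_of_pos hr]
  exact hrε
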